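/- Let E ⊆ X × Y be measurable in a graded probability space with E d-μ-stable (d ≥ 1), and let U ⊆ X be measurable with μ(U) > 0. Then there exist m with 1 ≤ m ≤ d and σ ∈ 2^m such that the set of tuples b̄ = (b_0,...,b_{m−1}) ∈ Y^m for which U ∩ E^σ_{b̄} is perfect for E and has positive measure, itself has positive measure in Y^m. -/

import Mathlib

open Set MeasureTheory
open scoped ENNReal
set_option linter.unusedSectionVars false
set_option maxHeartbeats 1000000

/-- The index set `2^{<d}` of 0-1 sequences of length `< d`. -/
abbrev TreeIdx (d : ℕ) := (i : Fin d) × (Fin i.val → Bool)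

/-- The set `E^σ_{(b_{σ|_0}, …, b_{σ|_{i-1}})}` along the branch `σ ∈ 2^i`. -/
def branchSet {X Y : Type*} (E : Set (X × Y)) {d : ℕ} (b : TreeIdx d → Y)
    (i : Fin d) (σ : Fin i.val → Bool) : Set X :=
  {x | ∀ j : Fin i.val,
    ((x, b ⟨⟨j.1, j.2.trans i.2⟩, fun k => σ ⟨k.1, k.2.trans j.2⟩⟩) ∈ E ↔ σ j = true)}

/-- The set of μ-trees of height `d` for `E`. -/
def muTreeSet {X Y : Type*} [MeasurableSpace X] (μX : Measure X)
    (E : Set (X × Y)) (d : ℕ) : Set (TreeIdx d → Y) :=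
  {b | ∀ (i : Fin d) (σ : Fin i.val → Bool),
    0 < μX (branchSet E b i σ ∩ {x | (x, b ⟨i, σ⟩) ∈ E}) ∧
    0 < μX (branchSet E b i σ \ {x | (x, b ⟨i, σ⟩) ∈ E})}

/-- `A` is perfect for `E`: the set of `y` whose fiber μ-splits `A` has measure zero. -/
def PerfectFor {X Y : Type*} [MeasurableSpace X] [MeasurableSpace Y]
    (μX : Measure X) (μY : Measure Y) (E : Set (X × Y)) (A : Set X) : Prop :=
  μY {y | 0 < μX (A ∩ {x | (x, y) ∈ E}) ∧ 0 < μX (A \ {x | (x, y) ∈ E})} = 0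

namespace StableAux

set_option linter.unusedSectionVars false in
lemma cons_mk_zero {n : ℕ} (c : Bool) (τ : Fin n → Bool) (h : 0 < n + 1) :
    Fin.cons (α := fun _ => Bool) c τ (⟨0, h⟩ : Fin (n + 1)) = c := rfl

lemma tail_cons' {v : ℕ} (c : Bool) (τ : Fin v → Bool) :
    (fun k : Fin v => Fin.cons (α := fun _ => Bool) c τ k.succ) = τ :=
  funext fun _ => rfl

lemma cons_self' {v : ℕ} (σ : Fin (v + 1) → Bool) :
    Fin.cons (α := fun _ => Bool) (σ ⟨0, Nat.succ_pos v⟩) (fun k => σ k.succ) = σ :=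
  funext fun j => by
    rcases j with ⟨jv, hj⟩
    cases jv with
    | zero => rfl
    | succ k => rfl

def rootIdx (d : ℕ) : TreeIdx (d + 1) := ⟨⟨0, Nat.succ_pos d⟩, Fin.elim0⟩

def nodeIdx {d : ℕ} (c : Bool) (t : TreeIdx d) : TreeIdx (d + 1) :=
  ⟨⟨t.1.val + 1, Nat.succ_lt_succ t.1.isLt⟩, Fin.cons c t.2⟩

def treeToFun {d : ℕ} : Unit ⊕ (TreeIdx d ⊕ TreeIdx d) → TreeIdx (d + 1)
  | Sum.inl _ => rootIdx d
  | Sum.inr (Sum.inl t) => nodeIdx true t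
  | Sum.inr (Sum.inr t) => nodeIdx false t

def treeInvFun {d : ℕ} : TreeIdx (d + 1) → Unit ⊕ (TreeIdx d ⊕ TreeIdx d)
  | ⟨⟨0, _⟩, _⟩ => Sum.inl ()
  | ⟨⟨i + 1, h⟩, σ⟩ =>
    if σ ⟨0, Nat.succ_pos i⟩ = true then
      Sum.inr (Sum.inl ⟨⟨i, Nat.lt_of_succ_lt_succ h⟩, fun k => σ k.succ⟩)
    else
      Sum.inr (Sum.inr ⟨⟨i, Nat.lt_of_succ_lt_succ h⟩, fun k => σ k.succ⟩)

lemma treeInvFun_node {d : ℕ} (c : Bool) (t : TreeIdx d) :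
    treeInvFun (nodeIdx c t) =
      Sum.inr (if c then Sum.inl t else Sum.inr t) := by
  rcases t with ⟨⟨v, hv⟩, τ⟩
  show (if Fin.cons (α := fun _ => Bool) c τ ⟨0, Nat.succ_pos v⟩ = true then _ else _) = _
  rw [cons_mk_zero]
  cases c
  · rw [if_neg (by simp), if_neg (by simp)]
    exact congrArg _ (congrArg _ (congrArg _ (tail_cons' false τ)))
  · rw [if_pos rfl, if_pos rfl]
    exact congrArg _ (congrArg _ (congrArg _ (tail_cons' true τ)))

def treeEquiv (d : ℕ) : Unit ⊕ (TreeIdx d ⊕ TreeIdx d) ≃ TreeIdx (d + 1) where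
  toFun := treeToFun
  invFun := treeInvFun
  left_inv p := by
    rcases p with _ | (t | t)
    · rfl
    · rw [show treeToFun (Sum.inr (Sum.inl t)) = nodeIdx true t from rfl, treeInvFun_node]; rfl
    · rw [show treeToFun (Sum.inr (Sum.inr t)) = nodeIdx false t from rfl, treeInvFun_node]; rfl
  right_inv j := by
    rcases j with ⟨⟨v, hv⟩, σ⟩
    cases v with
    | zero =>
      show rootIdx d = _
      unfold rootIdx
      congr 1
      exact funext fun k => k.elim0
    | succ i =>
      by_cases hc : σ ⟨0, Nat.succ_pos i⟩ = true
      · show treeToFun (if _ = true then _ else _) = _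
        rw [if_pos hc]
        have h2 := cons_self' σ
        rw [hc] at h2
        exact congrArg (fun τ => (⟨⟨i + 1, hv⟩, τ⟩ : TreeIdx (d + 1))) h2
      · show treeToFun (if _ = true then _ else _) = _
        rw [if_neg hc]
        have h2 := cons_self' σ
        rw [(Bool.not_eq_true _).mp hc] at h2
        exact congrArg (fun τ => (⟨⟨i + 1, hv⟩, τ⟩ : TreeIdx (d + 1))) h2

lemma treeEquiv_inl (d : ℕ) : treeEquiv d (Sum.inl ()) = rootIdx d := rfl
lemma treeEquiv_inrl (d : ℕ) (t : TreeIdx d) :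
    treeEquiv d (Sum.inr (Sum.inl t)) = nodeIdx true t := rfl
lemma treeEquiv_inrr (d : ℕ) (t : TreeIdx d) :
    treeEquiv d (Sum.inr (Sum.inr t)) = nodeIdx false t := rfl

lemma treeIdx_cases {d : ℕ} (j : TreeIdx (d + 1)) :
    j = rootIdx d ∨ ∃ c t, j = nodeIdx c t := by
  have h := (treeEquiv d).right_inv j
  rcases hp : (treeEquiv d).invFun j with _ | (t | t)
  · left; rw [← h, hp]; rfl
  · right; exact ⟨true, t, by rw [← h, hp]; rfl⟩
  · right; exact ⟨false, t, by rw [← h, hp]; rfl⟩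

variable {X Y : Type*} [MeasurableSpace X] [MeasurableSpace Y]

def secE (E : Set (X × Y)) (y : Y) : Set X := {x | (x, y) ∈ E}

def bSet (E : Set (X × Y)) (y : Y) (c : Bool) : Set X := {x | ((x, y) ∈ E ↔ c = true)}

def ESet (E : Set (X × Y)) {m : ℕ} (σ : Fin m → Bool) (b : Fin m → Y) : Set X :=
  {x | ∀ i, ((x, b i) ∈ E ↔ σ i = true)}

def spl (μX : Measure X) (E : Set (X × Y)) (W : Set X) : Set Y :=
  {y | 0 < μX (W ∩ secE E y) ∧ 0 < μX (W \ secE E y)}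

def TSW (μX : Measure X) (E : Set (X × Y)) (d : ℕ) (W : Set X) : Set (TreeIdx d → Y) :=
  {b | ∀ (i : Fin d) (σ : Fin i.val → Bool),
    0 < μX (W ∩ branchSet E b i σ ∩ secE E (b ⟨i, σ⟩)) ∧
    0 < μX ((W ∩ branchSet E b i σ) \ secE E (b ⟨i, σ⟩))}

section Basic
variable {μX : Measure X} {μY : Measure Y} {E : Set (X × Y)}

omit [MeasurableSpace Y] in
lemma bSet_true (y : Y) : bSet E y true = secE E y := by
  ext x; simp [bSet, secE]

omit [MeasurableSpace Y] in
lemma bSet_false (y : Y) : bSet E y false = (secE E y)ᶜ := by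
  ext x; simp [bSet, secE]

omit [MeasurableSpace Y] in
lemma TSW_univ (d : ℕ) : TSW μX E d univ = muTreeSet μX E d := by
  ext b; unfold TSW muTreeSet; simp only [univ_inter, mem_setOf_eq]; rfl

omit [MeasurableSpace Y] in
lemma spl_mono {U W : Set X} (h : U ⊆ W) : spl μX E U ⊆ spl μX E W := by
  intro y hy
  exact ⟨lt_of_lt_of_le hy.1 (measure_mono (inter_subset_inter_left _ h)),
    lt_of_lt_of_le hy.2 (measure_mono (diff_subset_diff_left h))⟩

omit [MeasurableSpace Y] in
lemma measure_eq_of_diff_null {A U : Set X} (hAU : A ⊆ U) (hnull : μX (U \ A) = 0)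
    (s : Set X) : μX (A ∩ s) = μX (U ∩ s) := by
  refine le_antisymm (measure_mono (inter_subset_inter_left _ hAU)) ?_
  calc μX (U ∩ s) ≤ μX ((A ∩ s) ∪ (U \ A)) := by
        refine measure_mono fun x hx => ?_
        by_cases hA : x ∈ A
        · exact Or.inl ⟨hA, hx.2⟩
        · exact Or.inr ⟨hx.1, hA⟩
    _ ≤ μX (A ∩ s) + μX (U \ A) := measure_union_le _ _
    _ = μX (A ∩ s) := by rw [hnull, add_zero]

omit [MeasurableSpace Y] in
lemma measure_diff_eq_of_diff_null {A U : Set X} (hAU : A ⊆ U) (hnull : μX (U \ A) = 0)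
    (s : Set X) : μX (A \ s) = μX (U \ s) := by
  refine le_antisymm (measure_mono (diff_subset_diff_left hAU)) ?_
  calc μX (U \ s) ≤ μX ((A \ s) ∪ (U \ A)) := by
        refine measure_mono fun x hx => ?_
        by_cases hA : x ∈ A
        · exact Or.inl ⟨hA, hx.2⟩
        · exact Or.inr ⟨hx.1, hA⟩
    _ ≤ μX (A \ s) + μX (U \ A) := measure_union_le _ _
    _ = μX (A \ s) := by rw [hnull, add_zero]

omit [MeasurableSpace Y] in
lemma measure_eq_of_diff_null' {A U : Set X} (hAU : A ⊆ U) (hnull : μX (U \ A) = 0) :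
    μX A = μX U := by
  refine le_antisymm (measure_mono hAU) ?_
  calc μX U ≤ μX (A ∪ (U \ A)) := by
        refine measure_mono fun x hx => ?_
        by_cases hA : x ∈ A
        · exact Or.inl hA
        · exact Or.inr ⟨hx, hA⟩
    _ ≤ μX A + μX (U \ A) := measure_union_le _ _
    _ = μX A := by rw [hnull, add_zero]

lemma spl_congr {A U : Set X} (hAU : A ⊆ U) (hnull : μX (U \ A) = 0) :
    spl μX E A = spl μX E U := by
  ext y
  unfold spl
  rw [mem_setOf_eq, mem_setOf_eq, measure_eq_of_diff_null hAU hnull,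
    measure_diff_eq_of_diff_null hAU hnull]

lemma perfect_iff (A : Set X) : PerfectFor μX μY E A ↔ μY (spl μX E A) = 0 := Iff.rfl

omit [MeasurableSpace X] [MeasurableSpace Y] in
lemma ESet_one (c : Bool) (b : Fin 1 → Y) :
    ESet E (fun _ => c) b = bSet E (b 0) c := by
  ext x
  simp only [ESet, bSet, mem_setOf_eq]
  constructor
  · exact fun h => h 0
  · intro h i
    rw [Subsingleton.elim i 0]
    exact h

omit [MeasurableSpace X] [MeasurableSpace Y] in
lemma ESet_succ (c : Bool) {m : ℕ} (σ : Fin m → Bool) (g : Fin (m + 1) → Y) :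
    ESet E (Fin.cons c σ) g = bSet E (g 0) c ∩ ESet E σ (fun j => g j.succ) := by
  ext x
  simp only [ESet, bSet, mem_inter_iff, mem_setOf_eq]
  constructor
  · intro h
    refine ⟨by have := h 0; rwa [Fin.cons_zero] at this, fun j => ?_⟩
    have := h j.succ
    rwa [Fin.cons_succ] at this
  · rintro ⟨h0, hs⟩ i
    refine Fin.cases ?_ ?_ i
    · rw [Fin.cons_zero]; exact h0
    · intro j; rw [Fin.cons_succ]; exact hs j

end Basic

section PhiLemmas
variable {μX : Measure X} {E : Set (X × Y)}

def Φ {d : ℕ} (p : Y × ((TreeIdx d → Y) × (TreeIdx d → Y))) : TreeIdx (d + 1) → Y :=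
  fun j => match j with
    | ⟨⟨0, _⟩, _⟩ => p.1
    | ⟨⟨i + 1, h⟩, σ⟩ =>
      (if σ ⟨0, Nat.succ_pos i⟩ = true then p.2.1 else p.2.2)
        ⟨⟨i, Nat.lt_of_succ_lt_succ h⟩, fun k => σ k.succ⟩

lemma Φ_rootIdx {d : ℕ} (p : Y × ((TreeIdx d → Y) × (TreeIdx d → Y))) :
    Φ p (rootIdx d) = p.1 := rfl

lemma Φ_node {d : ℕ} (p : Y × ((TreeIdx d → Y) × (TreeIdx d → Y)))
    (c : Bool) (t : TreeIdx d) :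
    Φ p (nodeIdx c t) = (if c then p.2.1 else p.2.2) t := by
  rcases t with ⟨⟨v, hv⟩, τ⟩
  show (if Fin.cons (α := fun _ => Bool) c τ ⟨0, Nat.succ_pos v⟩ = true then p.2.1 else p.2.2)
      ⟨⟨v, _⟩, fun k => Fin.cons (α := fun _ => Bool) c τ k.succ⟩ = _
  rw [cons_mk_zero, tail_cons']

lemma measurable_Φ {d : ℕ} : Measurable (Φ (Y := Y) (d := d)) := by
  apply measurable_pi_lambda
  intro j
  rcases j with ⟨⟨v, hv⟩, σ⟩
  cases v with
  | zero => exact measurable_fst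
  | succ i =>
    show Measurable fun p : Y × ((TreeIdx d → Y) × (TreeIdx d → Y)) =>
      (if σ ⟨0, Nat.succ_pos i⟩ = true then p.2.1 else p.2.2) _
    by_cases hc : σ ⟨0, Nat.succ_pos i⟩ = true
    · simp only [hc, if_true]
      exact (measurable_pi_apply _).comp (measurable_fst.comp measurable_snd)
    · simp only [hc, if_false]
      exact (measurable_pi_apply _).comp (measurable_snd.comp measurable_snd)

omit [MeasurableSpace Y] in
lemma branch_zero {d : ℕ} (E : Set (X × Y)) (b : TreeIdx (d + 1) → Y)
    (h : 0 < d + 1) (σ : Fin (0:ℕ) → Bool) :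
    branchSet E b ⟨0, h⟩ σ = univ :=
  eq_univ_of_forall fun _ j => j.elim0

omit [MeasurableSpace Y] in
lemma mem_branch_succ {d : ℕ} (E : Set (X × Y))
    (p : Y × ((TreeIdx d → Y) × (TreeIdx d → Y)))
    {i' : ℕ} (hi : i' + 1 < d + 1) (σ : Fin (i' + 1) → Bool) (x : X) :
    x ∈ branchSet E (Φ p) ⟨i' + 1, hi⟩ σ ↔
      (x ∈ bSet E p.1 (σ ⟨0, Nat.succ_pos i'⟩) ∧
        x ∈ branchSet E (if σ ⟨0, Nat.succ_pos i'⟩ = true then p.2.1 else p.2.2)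
          ⟨i', Nat.lt_of_succ_lt_succ hi⟩ (fun k => σ k.succ)) := by
  constructor
  · intro H
    exact ⟨H ⟨0, Nat.succ_pos i'⟩, fun j' => H ⟨j'.val + 1, Nat.succ_lt_succ j'.isLt⟩⟩
  · rintro ⟨h0, hs⟩ ⟨jv, hj⟩
    cases jv with
    | zero => exact h0
    | succ k => exact hs ⟨k, Nat.lt_of_succ_lt_succ hj⟩

omit [MeasurableSpace Y] in
lemma branch_succ_eq {d : ℕ} (E : Set (X × Y))
    (p : Y × ((TreeIdx d → Y) × (TreeIdx d → Y)))
    {i' : ℕ} (hi : i' + 1 < d + 1) (σ : Fin (i' + 1) → Bool) (W : Set X) :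
    W ∩ branchSet E (Φ p) ⟨i' + 1, hi⟩ σ =
      (W ∩ bSet E p.1 (σ ⟨0, Nat.succ_pos i'⟩)) ∩
        branchSet E (if σ ⟨0, Nat.succ_pos i'⟩ = true then p.2.1 else p.2.2)
          ⟨i', Nat.lt_of_succ_lt_succ hi⟩ (fun k => σ k.succ) := by
  have : branchSet E (Φ p) ⟨i' + 1, hi⟩ σ =
      bSet E p.1 (σ ⟨0, Nat.succ_pos i'⟩) ∩
        branchSet E (if σ ⟨0, Nat.succ_pos i'⟩ = true then p.2.1 else p.2.2)
          ⟨i', Nat.lt_of_succ_lt_succ hi⟩ (fun k => σ k.succ) :=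
    Set.ext fun x => mem_branch_succ E p hi σ x
  rw [this, inter_assoc]

omit [MeasurableSpace Y] in
lemma Φ_mem_TSW {d : ℕ} (μX : Measure X) (E : Set (X × Y)) (W : Set X)
    (p : Y × ((TreeIdx d → Y) × (TreeIdx d → Y)))
    (hy : p.1 ∈ spl μX E W)
    (hg : p.2.1 ∈ TSW μX E d (W ∩ bSet E p.1 true))
    (hh : p.2.2 ∈ TSW μX E d (W ∩ bSet E p.1 false)) :
    Φ p ∈ TSW μX E (d + 1) W := by
  rintro ⟨iv, hi⟩ σ
  cases iv with
  | zero =>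
    show 0 < μX (W ∩ branchSet E (Φ p) ⟨0, hi⟩ σ ∩ secE E (Φ p ⟨⟨0, hi⟩, σ⟩)) ∧
      0 < μX ((W ∩ branchSet E (Φ p) ⟨0, hi⟩ σ) \ secE E (Φ p ⟨⟨0, hi⟩, σ⟩))
    rw [branch_zero, inter_univ]
    exact hy
  | succ i' =>
    show 0 < μX (W ∩ branchSet E (Φ p) ⟨i' + 1, hi⟩ σ ∩ secE E (Φ p ⟨⟨i' + 1, hi⟩, σ⟩)) ∧
      0 < μX ((W ∩ branchSet E (Φ p) ⟨i' + 1, hi⟩ σ) \ secE E (Φ p ⟨⟨i' + 1, hi⟩, σ⟩))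
    have hΦ : Φ p ⟨⟨i' + 1, hi⟩, σ⟩ =
        (if σ ⟨0, Nat.succ_pos i'⟩ = true then p.2.1 else p.2.2)
          ⟨⟨i', Nat.lt_of_succ_lt_succ hi⟩, fun k => σ k.succ⟩ := rfl
    rw [branch_succ_eq, hΦ]
    by_cases hc : σ ⟨0, Nat.succ_pos i'⟩ = true
    · rw [hc, if_pos rfl]
      exact hg ⟨i', Nat.lt_of_succ_lt_succ hi⟩ (fun k => σ k.succ)
    · rw [(Bool.not_eq_true _).mp hc, if_neg (by simp)]
      exact hh ⟨i', Nat.lt_of_succ_lt_succ hi⟩ (fun k => σ k.succ)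

end PhiLemmas

lemma map_Φ (μY : Measure Y) [IsProbabilityMeasure μY] (d : ℕ) :
    Measure.map (Φ (Y := Y) (d := d))
      (μY.prod ((Measure.pi fun _ : TreeIdx d => μY).prod (Measure.pi fun _ : TreeIdx d => μY)))
      = Measure.pi (fun _ : TreeIdx (d + 1) => μY) := by
  refine (Measure.pi_eq fun s hs => ?_).symm
  rw [Measure.map_apply measurable_Φ (MeasurableSet.univ_pi fun j => hs j)]
  have hpre : Φ (Y := Y) ⁻¹' (univ.pi s) =
      (s (rootIdx d)) ×ˢ ((univ.pi fun t => s (nodeIdx true t)) ×ˢ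
        (univ.pi fun t => s (nodeIdx false t))) := by
    ext p
    simp only [mem_preimage, mem_pi, mem_univ, forall_true_left, mem_prod, true_implies]
    constructor
    · intro h
      refine ⟨?_, fun t => ?_, fun t => ?_⟩
      · have := h (rootIdx d); rwa [Φ_rootIdx] at this
      · have := h (nodeIdx true t); rwa [Φ_node, if_pos rfl] at this
      · have := h (nodeIdx false t); rwa [Φ_node, if_neg (by simp)] at this
    · rintro ⟨h1, h2, h3⟩ j
      rcases treeIdx_cases j with rfl | ⟨c, t, rfl⟩
      · rwa [Φ_rootIdx]
      · rw [Φ_node]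
        cases c
        · rw [if_neg (by simp)]; exact h3 t
        · rw [if_pos rfl]; exact h2 t
  rw [hpre, Measure.prod_prod, Measure.prod_prod, Measure.pi_pi, Measure.pi_pi]
  rw [← Equiv.prod_comp (treeEquiv d) (fun j => μY (s j))]
  rw [Fintype.prod_sum_type]
  rw [Fintype.prod_sum_type]
  have hu : ∀ f : Unit → ℝ≥0∞, (∏ x : Unit, f x) = f () := fun f => by simp
  rw [hu]
  simp only [treeEquiv_inl, treeEquiv_inrl, treeEquiv_inrr]

section Meas
variable {μX : Measure X} {μY : Measure Y} [SFinite μX] [SFinite μY] {E : Set (X × Y)}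

lemma meas_pos_section {α : Type*} [MeasurableSpace α] {A : Set (α × X)}
    (hA : MeasurableSet A) : MeasurableSet {a | 0 < μX (Prod.mk a ⁻¹' A)} :=
  measurable_measure_prodMk_left (ν := μX) hA measurableSet_Ioi

lemma measIffE (hE : MeasurableSet E) {α : Type*} [MeasurableSpace α]
    {f : α → X} {h : α → Y} (hf : Measurable f) (hh : Measurable h) (c : Bool) :
    MeasurableSet {a | ((f a, h a) ∈ E ↔ c = true)} := by
  cases c
  · simp only [Bool.false_eq_true, iff_false]
    exact (hE.preimage (hf.prodMk hh)).compl
  · simp only [iff_true]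
    exact hE.preimage (hf.prodMk hh)

lemma measurableSet_branch_pair (hE : MeasurableSet E) {α : Type*} [MeasurableSpace α]
    {d' : ℕ} {G : α → (TreeIdx d' → Y)} (hG : Measurable G) (i : Fin d')
    (σ : Fin i.val → Bool) :
    MeasurableSet {q : α × X | q.2 ∈ branchSet E (G q.1) i σ} := by
  have : {q : α × X | q.2 ∈ branchSet E (G q.1) i σ} =
      ⋂ j : Fin i.val, {q : α × X |
        ((q.2, G q.1 ⟨⟨j.1, j.2.trans i.2⟩, fun k => σ ⟨k.1, k.2.trans j.2⟩⟩) ∈ E ↔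
          σ j = true)} := by
    ext q
    simp only [mem_setOf_eq, mem_iInter]
    exact Iff.rfl
  rw [this]
  exact MeasurableSet.iInter fun j =>
    measIffE hE measurable_snd ((measurable_pi_apply _).comp (hG.comp measurable_fst)) _

lemma measurableSet_TSW_param (hE : MeasurableSet E) {α : Type*} [MeasurableSpace α]
    {D : Set (α × X)} (hD : MeasurableSet D) {d' : ℕ}
    {G : α → (TreeIdx d' → Y)} (hG : Measurable G) :
    MeasurableSet {a : α | ∀ (i : Fin d') (σ : Fin i.val → Bool),
      0 < μX ((Prod.mk a ⁻¹' D) ∩ branchSet E (G a) i σ ∩ secE E (G a ⟨i, σ⟩)) ∧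
      0 < μX (((Prod.mk a ⁻¹' D) ∩ branchSet E (G a) i σ) \ secE E (G a ⟨i, σ⟩))} := by
  have : {a : α | ∀ (i : Fin d') (σ : Fin i.val → Bool),
      0 < μX ((Prod.mk a ⁻¹' D) ∩ branchSet E (G a) i σ ∩ secE E (G a ⟨i, σ⟩)) ∧
      0 < μX (((Prod.mk a ⁻¹' D) ∩ branchSet E (G a) i σ) \ secE E (G a ⟨i, σ⟩))} =
      ⋂ (i : Fin d') (σ : Fin i.val → Bool),
        ({a | 0 < μX ((Prod.mk a ⁻¹' D) ∩ branchSet E (G a) i σ ∩ secE E (G a ⟨i, σ⟩))} ∩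
         {a | 0 < μX (((Prod.mk a ⁻¹' D) ∩ branchSet E (G a) i σ) \ secE E (G a ⟨i, σ⟩))}) := by
    ext a
    simp only [mem_setOf_eq, mem_iInter, mem_inter_iff]
  rw [this]
  refine MeasurableSet.iInter fun i => MeasurableSet.iInter fun σ => ?_
  have hC1 : MeasurableSet {q : α × X |
      (q ∈ D ∧ q.2 ∈ branchSet E (G q.1) i σ) ∧ (q.2, G q.1 ⟨i, σ⟩) ∈ E} := by
    refine ((hD.inter (measurableSet_branch_pair hE hG i σ)).inter ?_)
    exact hE.preimage (measurable_snd.prodMk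
      ((measurable_pi_apply _).comp (hG.comp measurable_fst)))
  have hC2 : MeasurableSet {q : α × X |
      (q ∈ D ∧ q.2 ∈ branchSet E (G q.1) i σ) ∧ ¬(q.2, G q.1 ⟨i, σ⟩) ∈ E} := by
    refine ((hD.inter (measurableSet_branch_pair hE hG i σ)).inter ?_)
    exact (hE.preimage (measurable_snd.prodMk
      ((measurable_pi_apply _).comp (hG.comp measurable_fst)))).compl
  refine (meas_pos_section (μX := μX) hC1).inter ?_
  exact meas_pos_section (μX := μX) hC2

lemma measurableSet_TSW (hE : MeasurableSet E) {W : Set X} (hW : MeasurableSet W)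
    (d' : ℕ) : MeasurableSet (TSW μX E d' W) := by
  have h := measurableSet_TSW_param (μX := μX) hE (α := TreeIdx d' → Y)
    (D := {q : (TreeIdx d' → Y) × X | q.2 ∈ W}) (measurable_snd hW) measurable_id
  have he : ∀ b : TreeIdx d' → Y, Prod.mk b ⁻¹' {q : (TreeIdx d' → Y) × X | q.2 ∈ W} = W :=
    fun b => rfl
  simp only [he] at h
  exact h

lemma measurableSet_spl (hE : MeasurableSet E) {W : Set X} (hW : MeasurableSet W) :
    MeasurableSet (spl μX E W) := by
  have h1 : MeasurableSet {q : Y × X | q.2 ∈ W ∧ (q.2, q.1) ∈ E} :=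
    (measurable_snd hW).inter (hE.preimage (measurable_snd.prodMk measurable_fst))
  have h2 : MeasurableSet {q : Y × X | q.2 ∈ W ∧ ¬(q.2, q.1) ∈ E} :=
    (measurable_snd hW).inter (hE.preimage (measurable_snd.prodMk measurable_fst)).compl
  have he1 : ∀ y : Y, Prod.mk y ⁻¹' {q : Y × X | q.2 ∈ W ∧ (q.2, q.1) ∈ E} = W ∩ secE E y :=
    fun y => rfl
  have he2 : ∀ y : Y, Prod.mk y ⁻¹' {q : Y × X | q.2 ∈ W ∧ ¬(q.2, q.1) ∈ E} = W \ secE E y :=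
    fun y => rfl
  have := (meas_pos_section (μX := μX) h1).inter (meas_pos_section (μX := μX) h2)
  simp only [he1, he2] at this
  exact this

lemma measurableSet_perfect_pos (hE : MeasurableSet E) {α : Type*} [MeasurableSpace α]
    {A : Set (α × X)} (hA : MeasurableSet A) :
    MeasurableSet {a : α | PerfectFor μX μY E (Prod.mk a ⁻¹' A) ∧
      0 < μX (Prod.mk a ⁻¹' A)} := by
  have hB1 : MeasurableSet {q : (α × Y) × X | (q.1.1, q.2) ∈ A ∧ (q.2, q.1.2) ∈ E} :=
    (hA.preimage ((measurable_fst.comp measurable_fst).prodMk measurable_snd)).inter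
      (hE.preimage (measurable_snd.prodMk (measurable_snd.comp measurable_fst)))
  have hB2 : MeasurableSet {q : (α × Y) × X | (q.1.1, q.2) ∈ A ∧ ¬(q.2, q.1.2) ∈ E} :=
    (hA.preimage ((measurable_fst.comp measurable_fst).prodMk measurable_snd)).inter
      (hE.preimage (measurable_snd.prodMk (measurable_snd.comp measurable_fst))).compl
  have hP : MeasurableSet {q : α × Y |
      0 < μX (Prod.mk q ⁻¹' {q : (α × Y) × X | (q.1.1, q.2) ∈ A ∧ (q.2, q.1.2) ∈ E}) ∧
      0 < μX (Prod.mk q ⁻¹' {q : (α × Y) × X | (q.1.1, q.2) ∈ A ∧ ¬(q.2, q.1.2) ∈ E})} :=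
    (meas_pos_section (μX := μX) hB1).inter (meas_pos_section (μX := μX) hB2)
  have hmero : Measurable fun a : α => μY (Prod.mk a ⁻¹' {q : α × Y |
      0 < μX (Prod.mk q ⁻¹' {q : (α × Y) × X | (q.1.1, q.2) ∈ A ∧ (q.2, q.1.2) ∈ E}) ∧
      0 < μX (Prod.mk q ⁻¹' {q : (α × Y) × X | (q.1.1, q.2) ∈ A ∧ ¬(q.2, q.1.2) ∈ E})}) :=
    measurable_measure_prodMk_left (ν := μY) hP
  have key : ∀ a : α, PerfectFor μX μY E (Prod.mk a ⁻¹' A) ↔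
      μY (Prod.mk a ⁻¹' {q : α × Y |
        0 < μX (Prod.mk q ⁻¹' {q : (α × Y) × X | (q.1.1, q.2) ∈ A ∧ (q.2, q.1.2) ∈ E}) ∧
        0 < μX (Prod.mk q ⁻¹' {q : (α × Y) × X | (q.1.1, q.2) ∈ A ∧ ¬(q.2, q.1.2) ∈ E})}) = 0 :=
    fun a => Iff.rfl
  have hset : {a : α | PerfectFor μX μY E (Prod.mk a ⁻¹' A) ∧ 0 < μX (Prod.mk a ⁻¹' A)} =
      {a : α | μY (Prod.mk a ⁻¹' {q : α × Y |
        0 < μX (Prod.mk q ⁻¹' {q : (α × Y) × X | (q.1.1, q.2) ∈ A ∧ (q.2, q.1.2) ∈ E}) ∧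
        0 < μX (Prod.mk q ⁻¹' {q : (α × Y) × X | (q.1.1, q.2) ∈ A ∧ ¬(q.2, q.1.2) ∈ E})}) = 0}
      ∩ {a : α | 0 < μX (Prod.mk a ⁻¹' A)} := by
    ext a
    exact and_congr_left fun _ => key a
  rw [hset]
  exact (hmero (measurableSet_singleton 0)).inter (meas_pos_section (μX := μX) hA)

lemma lintegral_pos_of_pos_on {α : Type*} [MeasurableSpace α] {ν : Measure α}
    {f : α → ℝ≥0∞} (hf : Measurable f) {S : Set α} (hS : 0 < ν S)
    (h : ∀ a ∈ S, 0 < f a) : 0 < ∫⁻ a, f a ∂ν := by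
  rw [pos_iff_ne_zero]
  intro h0
  rw [lintegral_eq_zero_iff hf] at h0
  have hnull : ν {a | f a ≠ 0} = 0 := by
    simpa [Filter.EventuallyEq, ae_iff] using h0
  exact absurd (measure_mono_null (fun a ha => (h a ha).ne') hnull) hS.ne'

end Meas

section Main
variable {E : Set (X × Y)} {μX : Measure X} {μY : Measure Y}
  [IsProbabilityMeasure μX] [IsProbabilityMeasure μY]

lemma perfect_case (hE : MeasurableSet E) {U : Set X} (hU : MeasurableSet U)
    (hU0 : 0 < μX U) (hperf : μY (spl μX E U) = 0) :
    ∃ σ : Fin 1 → Bool, 0 < (Measure.pi fun _ : Fin 1 => μY)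
      {b : Fin 1 → Y | PerfectFor μX μY E (U ∩ ESet E σ b) ∧ 0 < μX (U ∩ ESet E σ b)} := by
  classical
  -- the sets Y_c
  have hYcmeas : ∀ c : Bool, MeasurableSet {y : Y | μX (U \ bSet E y c) = 0} := by
    intro c
    have hD : MeasurableSet {q : Y × X | q.2 ∈ U ∧ ¬((q.2, q.1) ∈ E ↔ c = true)} :=
      (measurable_snd hU).inter (measIffE hE measurable_snd measurable_fst c).compl
    have h := measurable_measure_prodMk_left (ν := μX) hD
    have hpre : ∀ y : Y, Prod.mk y ⁻¹' {q : Y × X | q.2 ∈ U ∧ ¬((q.2, q.1) ∈ E ↔ c = true)} =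
        U \ bSet E y c := fun y => rfl
    have := h (measurableSet_singleton 0)
    simp only [hpre] at this
    exact this
  -- covering
  have hcov : (univ : Set Y) ⊆ {y : Y | μX (U \ bSet E y true) = 0} ∪
      {y : Y | μX (U \ bSet E y false) = 0} ∪ spl μX E U := by
    intro y _
    by_cases h1 : μX (U \ bSet E y true) = 0
    · exact Or.inl (Or.inl h1)
    by_cases h2 : μX (U \ bSet E y false) = 0
    · exact Or.inl (Or.inr h2)
    refine Or.inr ⟨?_, ?_⟩
    · have : U \ bSet E y false = U ∩ secE E y := by
        rw [bSet_false, diff_compl]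
      rw [← this]
      exact pos_iff_ne_zero.mpr h2
    · have : U \ bSet E y true = U \ secE E y := by rw [bSet_true]
      rw [← this]
      exact pos_iff_ne_zero.mpr h1
  -- one of the two has positive measure
  have hex : ∃ c : Bool, 0 < μY {y : Y | μX (U \ bSet E y c) = 0} := by
    by_contra hcon
    push_neg at hcon
    have h1 : μY {y : Y | μX (U \ bSet E y true) = 0} = 0 :=
      le_antisymm (hcon true) zero_le
    have h2 : μY {y : Y | μX (U \ bSet E y false) = 0} = 0 :=
      le_antisymm (hcon false) zero_le
    have : μY (univ : Set Y) = 0 :=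
      measure_mono_null hcov (measure_union_null (measure_union_null h1 h2) hperf)
    rw [measure_univ] at this
    exact one_ne_zero this
  obtain ⟨c, hc⟩ := hex
  refine ⟨fun _ => c, ?_⟩
  -- cylinder over Y_c
  have hcyl : {b : Fin 1 → Y | b 0 ∈ {y : Y | μX (U \ bSet E y c) = 0}} =
      univ.pi (fun _ : Fin 1 => {y : Y | μX (U \ bSet E y c) = 0}) := by
    ext b
    simp only [mem_setOf_eq, mem_pi, mem_univ, true_implies]
    constructor
    · intro h i
      rw [Subsingleton.elim i 0]
      exact h
    · intro h
      exact h 0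
  have hsub : {b : Fin 1 → Y | b 0 ∈ {y : Y | μX (U \ bSet E y c) = 0}} ⊆
      {b : Fin 1 → Y | PerfectFor μX μY E (U ∩ ESet E (fun _ => c) b) ∧
        0 < μX (U ∩ ESet E (fun _ => c) b)} := by
    intro b hb
    have hAU : U ∩ bSet E (b 0) c ⊆ U := inter_subset_left
    have hnull : μX (U \ (U ∩ bSet E (b 0) c)) = 0 := by
      rw [diff_self_inter]
      exact hb
    constructor
    · rw [perfect_iff, ESet_one, spl_congr hAU hnull]
      exact hperf
    · rw [ESet_one, measure_eq_of_diff_null' hAU hnull]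
      exact hU0
  refine lt_of_lt_of_le ?_ (measure_mono hsub)
  rw [hcyl, Measure.pi_pi]
  rw [Fin.prod_univ_one]
  exact hc

lemma step_null (hE : MeasurableSet E) {W : Set X} (hW : MeasurableSet W) {d : ℕ}
    (hstab : (Measure.pi fun _ : TreeIdx (d + 1) => μY) (TSW μX E (d + 1) W) = 0) :
    ∀ᵐ y ∂μY, y ∈ spl μX E W →
      (Measure.pi fun _ : TreeIdx d => μY) (TSW μX E d (W ∩ bSet E y true)) = 0 ∨
      (Measure.pi fun _ : TreeIdx d => μY) (TSW μX E d (W ∩ bSet E y false)) = 0 := by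
  have hP0 : (μY.prod ((Measure.pi fun _ : TreeIdx d => μY).prod
      (Measure.pi fun _ : TreeIdx d => μY)))
      {p : Y × ((TreeIdx d → Y) × (TreeIdx d → Y)) | p.1 ∈ spl μX E W ∧
        p.2.1 ∈ TSW μX E d (W ∩ bSet E p.1 true) ∧
        p.2.2 ∈ TSW μX E d (W ∩ bSet E p.1 false)} = 0 := by
    refine le_antisymm ?_ zero_le
    have hsub : {p : Y × ((TreeIdx d → Y) × (TreeIdx d → Y)) | p.1 ∈ spl μX E W ∧
        p.2.1 ∈ TSW μX E d (W ∩ bSet E p.1 true) ∧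
        p.2.2 ∈ TSW μX E d (W ∩ bSet E p.1 false)} ⊆ Φ ⁻¹' (TSW μX E (d + 1) W) :=
      fun p hp => Φ_mem_TSW μX E W p hp.1 hp.2.1 hp.2.2
    calc (μY.prod ((Measure.pi fun _ : TreeIdx d => μY).prod
          (Measure.pi fun _ : TreeIdx d => μY))) _
        ≤ (μY.prod ((Measure.pi fun _ : TreeIdx d => μY).prod
          (Measure.pi fun _ : TreeIdx d => μY))) (Φ ⁻¹' (TSW μX E (d + 1) W)) :=
          measure_mono hsub
      _ = Measure.map Φ (μY.prod ((Measure.pi fun _ : TreeIdx d => μY).prod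
          (Measure.pi fun _ : TreeIdx d => μY))) (TSW μX E (d + 1) W) :=
          (Measure.map_apply measurable_Φ (measurableSet_TSW hE hW (d + 1))).symm
      _ = (Measure.pi fun _ : TreeIdx (d + 1) => μY) (TSW μX E (d + 1) W) := by
          rw [map_Φ]
      _ = 0 := hstab
  have hae := Measure.measure_ae_null_of_prod_null hP0
  filter_upwards [hae] with y hy hspl
  have hfib : Prod.mk y ⁻¹' {p : Y × ((TreeIdx d → Y) × (TreeIdx d → Y)) | p.1 ∈ spl μX E W ∧
      p.2.1 ∈ TSW μX E d (W ∩ bSet E p.1 true) ∧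
      p.2.2 ∈ TSW μX E d (W ∩ bSet E p.1 false)} =
      (TSW μX E d (W ∩ bSet E y true)) ×ˢ (TSW μX E d (W ∩ bSet E y false)) := by
    ext q
    simp only [mem_preimage, mem_setOf_eq, mem_prod]
    exact and_iff_right hspl
  have hy' : ((Measure.pi fun _ : TreeIdx d => μY).prod
      (Measure.pi fun _ : TreeIdx d => μY))
      (Prod.mk y ⁻¹' {p : Y × ((TreeIdx d → Y) × (TreeIdx d → Y)) | p.1 ∈ spl μX E W ∧
        p.2.1 ∈ TSW μX E d (W ∩ bSet E p.1 true) ∧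
        p.2.2 ∈ TSW μX E d (W ∩ bSet E p.1 false)}) = 0 := hy
  rw [hfib, Measure.prod_prod] at hy'
  exact mul_eq_zero.mp hy'

theorem GT (hE : MeasurableSet E) :
    ∀ d : ℕ, 1 ≤ d → ∀ W U : Set X, MeasurableSet W → MeasurableSet U → U ⊆ W → 0 < μX U →
      (Measure.pi fun _ : TreeIdx d => μY) (TSW μX E d W) = 0 →
      ∃ m : ℕ, 1 ≤ m ∧ m ≤ d ∧ ∃ σ : Fin m → Bool,
        0 < (Measure.pi fun _ : Fin m => μY)
          {b : Fin m → Y | PerfectFor μX μY E (U ∩ ESet E σ b) ∧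
            0 < μX (U ∩ ESet E σ b)} := by
  intro d hd
  induction d, hd using Nat.le_induction with
  | base =>
    intro W U hW hU hUW hU0 hstab
    have hsplU : μY (spl μX E U) = 0 := by
      by_contra hne
      have hWpos : 0 < μY (spl μX E W) :=
        lt_of_lt_of_le (pos_iff_ne_zero.mpr hne) (measure_mono (spl_mono hUW))
      have hsub : {b : TreeIdx 1 → Y | b ⟨⟨0, Nat.one_pos⟩, Fin.elim0⟩ ∈ spl μX E W} ⊆
          TSW μX E 1 W := by
        intro b hb
        rintro ⟨iv, hi⟩ σ
        cases iv with
        | zero =>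
          show 0 < μX (W ∩ branchSet E b ⟨0, hi⟩ σ ∩ secE E (b ⟨⟨0, hi⟩, σ⟩)) ∧
            0 < μX ((W ∩ branchSet E b ⟨0, hi⟩ σ) \ secE E (b ⟨⟨0, hi⟩, σ⟩))
          rw [branch_zero, inter_univ]
          have hidx : (⟨⟨0, hi⟩, σ⟩ : TreeIdx 1) = ⟨⟨0, Nat.one_pos⟩, Fin.elim0⟩ :=
            Sigma.ext rfl (heq_of_eq (funext fun k => k.elim0))
          rw [hidx]
          exact hb
        | succ i' => exact absurd hi (by omega)
      have hpos : 0 < (Measure.pi fun _ : TreeIdx 1 => μY) (TSW μX E 1 W) := by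
        refine lt_of_lt_of_le ?_ (measure_mono hsub)
        have hcyl : {b : TreeIdx 1 → Y | b ⟨⟨0, Nat.one_pos⟩, Fin.elim0⟩ ∈ spl μX E W} =
            univ.pi (fun _ : TreeIdx 1 => spl μX E W) := by
          ext b
          simp only [mem_setOf_eq, mem_pi, mem_univ, true_implies]
          constructor
          · intro h j
            have hj : j = (⟨⟨0, Nat.one_pos⟩, Fin.elim0⟩ : TreeIdx 1) := by
              rcases j with ⟨⟨jv, hjv⟩, τ⟩
              have hj0 : jv = 0 := by omega
              subst hj0
              exact Sigma.ext rfl (heq_of_eq (funext fun k => k.elim0))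
            rw [hj]; exact h
          · intro h; exact h _
        rw [hcyl, Measure.pi_pi]
        haveI : Unique (TreeIdx 1) := {
          default := ⟨⟨0, Nat.one_pos⟩, Fin.elim0⟩,
          uniq := fun j => by
            rcases j with ⟨⟨jv, hjv⟩, τ⟩
            have hj0 : jv = 0 := by omega
            subst hj0
            exact Sigma.ext rfl (heq_of_eq (funext fun k => k.elim0)) }
        rw [Finset.univ_unique, Finset.prod_singleton]
        exact hWpos
      rw [hstab] at hpos
      exact absurd hpos (lt_irrefl 0)
    obtain ⟨σ, hσ⟩ := perfect_case hE hU hU0 hsplU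
    exact ⟨1, le_refl 1, le_refl 1, σ, hσ⟩
  | succ d hd1 IH =>
    intro W U hW hU hUW hU0 hstab
    by_cases hsplU : μY (spl μX E U) = 0
    · obtain ⟨σ, hσ⟩ := perfect_case hE hU hU0 hsplU
      exact ⟨1, le_refl 1, by omega, σ, hσ⟩
    have hae := step_null hE hW hstab
    have hNnull : μY {y : Y | ¬ (y ∈ spl μX E W →
        (Measure.pi fun _ : TreeIdx d => μY) (TSW μX E d (W ∩ bSet E y true)) = 0 ∨
        (Measure.pi fun _ : TreeIdx d => μY) (TSW μX E d (W ∩ bSet E y false)) = 0)} = 0 :=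
      ae_iff.mp hae
    have hexists : ∃ (c : Bool) (m : ℕ), 1 ≤ m ∧ m ≤ d ∧ ∃ σ : Fin m → Bool,
        0 < μY {y : Y | 0 < (Measure.pi fun _ : Fin m => μY)
          {b : Fin m → Y | PerfectFor μX μY E ((U ∩ bSet E y c) ∩ ESet E σ b) ∧
            0 < μX ((U ∩ bSet E y c) ∩ ESet E σ b)}} := by
      by_contra hcon
      push_neg at hcon
      have hcov : spl μX E U \ {y : Y | ¬ (y ∈ spl μX E W →
          (Measure.pi fun _ : TreeIdx d => μY) (TSW μX E d (W ∩ bSet E y true)) = 0 ∨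
          (Measure.pi fun _ : TreeIdx d => μY) (TSW μX E d (W ∩ bSet E y false)) = 0)} ⊆
          ⋃ (c : Bool) (m : ℕ) (_ : 1 ≤ m) (_ : m ≤ d) (σ : Fin m → Bool),
            {y : Y | 0 < (Measure.pi fun _ : Fin m => μY)
              {b : Fin m → Y | PerfectFor μX μY E ((U ∩ bSet E y c) ∩ ESet E σ b) ∧
                0 < μX ((U ∩ bSet E y c) ∩ ESet E σ b)}} := by
        rintro y ⟨hyU, hyN⟩
        rw [mem_setOf_eq, not_not] at hyN
        obtain hnull := hyN (spl_mono hUW hyU)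
        have hbmeas : ∀ c : Bool, MeasurableSet (bSet E y c) :=
          fun c => measIffE hE measurable_id measurable_const c
        have hbpos : ∀ c : Bool, 0 < μX (U ∩ bSet E y c) := by
          intro c
          cases c
          · rw [bSet_false, ← diff_eq]
            exact hyU.2
          · rw [bSet_true]
            exact hyU.1
        have hrec : ∀ c : Bool,
            (Measure.pi fun _ : TreeIdx d => μY) (TSW μX E d (W ∩ bSet E y c)) = 0 →
            y ∈ ⋃ (c : Bool) (m : ℕ) (_ : 1 ≤ m) (_ : m ≤ d) (σ : Fin m → Bool),
              {y : Y | 0 < (Measure.pi fun _ : Fin m => μY)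
                {b : Fin m → Y | PerfectFor μX μY E ((U ∩ bSet E y c) ∩ ESet E σ b) ∧
                  0 < μX ((U ∩ bSet E y c) ∩ ESet E σ b)}} := by
          intro c hc
          obtain ⟨m, hm1, hmd, σ, hpos⟩ := IH (W ∩ bSet E y c) (U ∩ bSet E y c)
            (hW.inter (hbmeas c)) (hU.inter (hbmeas c))
            (inter_subset_inter hUW Subset.rfl) (hbpos c) hc
          exact mem_iUnion.mpr ⟨c, mem_iUnion.mpr ⟨m, mem_iUnion.mpr ⟨hm1,
            mem_iUnion.mpr ⟨hmd, mem_iUnion.mpr ⟨σ, hpos⟩⟩⟩⟩⟩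
        rcases hnull with hc | hc
        · exact hrec true hc
        · exact hrec false hc
      have hUnionNull : μY (⋃ (c : Bool) (m : ℕ) (_ : 1 ≤ m) (_ : m ≤ d) (σ : Fin m → Bool),
          {y : Y | 0 < (Measure.pi fun _ : Fin m => μY)
            {b : Fin m → Y | PerfectFor μX μY E ((U ∩ bSet E y c) ∩ ESet E σ b) ∧
              0 < μX ((U ∩ bSet E y c) ∩ ESet E σ b)}}) = 0 := by
        refine measure_iUnion_null fun c => measure_iUnion_null fun m =>
          measure_iUnion_null fun hm1 => measure_iUnion_null fun hmd =>
          measure_iUnion_null fun σ => ?_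
        have := hcon c m hm1 hmd σ
        exact le_antisymm this zero_le
      have hdiff : μY (spl μX E U \ {y : Y | ¬ (y ∈ spl μX E W →
          (Measure.pi fun _ : TreeIdx d => μY) (TSW μX E d (W ∩ bSet E y true)) = 0 ∨
          (Measure.pi fun _ : TreeIdx d => μY) (TSW μX E d (W ∩ bSet E y false)) = 0)}) =
          μY (spl μX E U) := measure_diff_null hNnull
      have : μY (spl μX E U) = 0 := by
        rw [← hdiff]
        exact measure_mono_null hcov hUnionNull
      exact hsplU this
    obtain ⟨c, m, hm1, hmd, σ, hH⟩ := hexists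
    refine ⟨m + 1, by omega, by omega, Fin.cons c σ, ?_⟩
    -- the joint set S
    have hA : MeasurableSet {q : (Y × (Fin m → Y)) × X |
        (q.2 ∈ U ∧ ((q.2, q.1.1) ∈ E ↔ c = true)) ∧
        ∀ i, ((q.2, q.1.2 i) ∈ E ↔ σ i = true)} := by
      refine ((hU.preimage measurable_snd).inter
        (measIffE hE measurable_snd (measurable_fst.comp measurable_fst) c)).inter ?_
      have hI : {q : (Y × (Fin m → Y)) × X | ∀ i, ((q.2, q.1.2 i) ∈ E ↔ σ i = true)} =
          ⋂ i, {q : (Y × (Fin m → Y)) × X | ((q.2, q.1.2 i) ∈ E ↔ σ i = true)} := by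
        ext q
        simp only [mem_setOf_eq, mem_iInter]
      have hM := MeasurableSet.iInter fun i => measIffE hE (α := (Y × (Fin m → Y)) × X)
        (f := Prod.snd) (h := fun q => q.1.2 i) measurable_snd
        ((measurable_pi_apply i).comp (measurable_snd.comp measurable_fst)) (σ i)
      rwa [← hI] at hM
    have hSmeas : MeasurableSet {q : Y × (Fin m → Y) |
        PerfectFor μX μY E ((U ∩ bSet E q.1 c) ∩ ESet E σ q.2) ∧
        0 < μX ((U ∩ bSet E q.1 c) ∩ ESet E σ q.2)} := by
      have h := measurableSet_perfect_pos (μX := μX) (μY := μY) hE hA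
      have hpre : ∀ q : Y × (Fin m → Y),
          Prod.mk q ⁻¹' {q : (Y × (Fin m → Y)) × X |
            (q.2 ∈ U ∧ ((q.2, q.1.1) ∈ E ↔ c = true)) ∧
            ∀ i, ((q.2, q.1.2 i) ∈ E ↔ σ i = true)} =
          (U ∩ bSet E q.1 c) ∩ ESet E σ q.2 := fun q => rfl
      simpa only [hpre] using h
    have hsets : ∀ g : Fin (m + 1) → Y, U ∩ ESet E (Fin.cons c σ) g =
        (U ∩ bSet E (g 0) c) ∩ ESet E σ (fun j => g ((0 : Fin (m + 1)).succAbove j)) := by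
      intro g
      have hsa : (fun j : Fin m => g ((0 : Fin (m + 1)).succAbove j)) = fun j => g j.succ := by
        funext j
        rw [Fin.succAbove_zero]
      rw [hsa, ESet_succ, ← inter_assoc]
    have hmp := measurePreserving_piFinSuccAbove (fun _ : Fin (m + 1) => μY) 0
    have htarget : {b : Fin (m + 1) → Y |
        PerfectFor μX μY E (U ∩ ESet E (Fin.cons c σ) b) ∧
        0 < μX (U ∩ ESet E (Fin.cons c σ) b)} =
        (MeasurableEquiv.piFinSuccAbove (fun _ : Fin (m + 1) => Y) 0) ⁻¹'
          {q : Y × (Fin m → Y) |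
            PerfectFor μX μY E ((U ∩ bSet E q.1 c) ∩ ESet E σ q.2) ∧
            0 < μX ((U ∩ bSet E q.1 c) ∩ ESet E σ q.2)} := by
      ext g
      have happ : (MeasurableEquiv.piFinSuccAbove (fun _ : Fin (m + 1) => Y) 0) g =
          (g 0, fun j => g ((0 : Fin (m + 1)).succAbove j)) := rfl
      simp only [mem_preimage, happ, mem_setOf_eq, hsets g]
    rw [htarget, hmp.measure_preimage hSmeas.nullMeasurableSet]
    rw [Measure.prod_apply hSmeas]
    exact lintegral_pos_of_pos_on (measurable_measure_prodMk_left hSmeas) hH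
      (fun y hy => hy)

end Main

end StableAux

/-- For a `d`-μ-stable relation `E` and a positive measure set `U`, for some `1 ≤ m ≤ d`
and `σ ∈ 2^m`, a positive measure of the tuples `b̄ ∈ Y^m` cut out a perfect subset
`U ∩ E^σ_{b̄}` of positive measure. -/
theorem pos_measure_of_perfect_sets
    {X Y : Type*} [MeasurableSpace X] [MeasurableSpace Y]
    (μX : Measure X) (μY : Measure Y)
    [IsProbabilityMeasure μX] [IsProbabilityMeasure μY]
    (E : Set (X × Y)) (hE : MeasurableSet E) (d : ℕ) (hd : 1 ≤ d)
    (hstab : (Measure.pi fun _ : TreeIdx d => μY) (muTreeSet μX E d) = 0)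
    (U : Set X) (hU : MeasurableSet U) (hU0 : 0 < μX U) :
    ∃ m : ℕ, 1 ≤ m ∧ m ≤ d ∧ ∃ σ : Fin m → Bool,
      0 < (Measure.pi fun _ : Fin m => μY)
        {b : Fin m → Y |
          PerfectFor μX μY E (U ∩ {x | ∀ i : Fin m, ((x, b i) ∈ E ↔ σ i = true)}) ∧
          0 < μX (U ∩ {x | ∀ i : Fin m, ((x, b i) ∈ E ↔ σ i = true)})} := by
  rw [← StableAux.TSW_univ (μX := μX) (E := E) d] at hstab
  obtain ⟨m, h1, h2, σ, h⟩ := StableAux.GT hE d hd univ U MeasurableSet.univ hU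
    (subset_univ U) hU0 hstab
  exact ⟨m, h1, h2, σ, h⟩
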